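/- Let F be the fraction field of D inside Ω and n ≥ 1. Let S₁ and S₂ be finite subsets of F(x)[X,1/det(X)] (respectively, of F[X,1/det(X)]). If S₁ is contained in the radical of the ideal generated by S₂ in Ω(x)[X,1/det(X)] (respectively, in Ω[X,1/det(X)]), then there is a nonzero c ∈ D such that for every φ ∈ Hom_k(D,k̄) with φ(c) ≠ 0: every element p of S₁ ∪ S₂ specializes to a well-defined element φ(p) of k̄(x)[X,1/det(X)] (respectively, of k̄[X,1/det(X)]) — obtained by writing the coefficients of p as quotients of elements of D[x] (respectively, of D) whose denominators have nonzero image under φ and applying φ — and φ(S₁) is contained in the radical of the ideal generated by φ(S₂) in k̄(x)[X,1/det(X)] (respectively, in k̄[X,1/det(X)]). -/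

import Mathlib

set_option linter.unusedSectionVars false
set_option linter.unusedVariables false


noncomputable section MatrixLocalization

/-- The determinant of the generic `n × n` matrix `X = (X_{ij})`. -/
def detPoly (n : ℕ) (E : Type*) [CommRing E] : MvPolynomial (Fin n × Fin n) E :=
  (Matrix.of fun i j : Fin n => MvPolynomial.X (i, j)).det

/-- The ring `E[X, 1/det(X)]`. -/
abbrev MatrixLoc (n : ℕ) (E : Type*) [CommRing E] := Localization.Away (detPoly n E)

theorem map_detPoly {E E' : Type*} [CommRing E] [CommRing E'] (n : ℕ) (u : E →+* E') :
    MvPolynomial.map u (detPoly n E) = detPoly n E' := by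
  simp only [detPoly, RingHom.map_det]
  congr 1
  ext i j
  simp [Matrix.map_apply]

/-- The canonical map `A[X] → E[X,1/det(X)]` induced by `g : A →+* E` on coefficients. -/
def toML {A E : Type*} [CommRing A] [CommRing E] (n : ℕ) (g : A →+* E) :
    MvPolynomial (Fin n × Fin n) A →+* MatrixLoc n E :=
  (algebraMap (MvPolynomial (Fin n × Fin n) E) (MatrixLoc n E)).comp (MvPolynomial.map g)

/-- The ring homomorphism `E[X,1/det(X)] → E'[X,1/det(X)]` induced by `u : E →+* E'`. -/
def MatrixLocMap {E E' : Type*} [CommRing E] [CommRing E'] (n : ℕ) (u : E →+* E') :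
    MatrixLoc n E →+* MatrixLoc n E' :=
  Localization.awayLift (toML n u) (detPoly n E) (by
    have h : toML n u (detPoly n E)
        = algebraMap (MvPolynomial (Fin n × Fin n) E') (MatrixLoc n E') (detPoly n E') := by
      simp [toML, map_detPoly n u]
    rw [h]
    exact IsLocalization.Away.algebraMap_isUnit _)

/-- `p ∈ Frac(A)[X,1/det(X)]` specializes, along `σ : A →+* B`, to the well-defined element
`y ∈ B[X,1/det(X)]`: `p` can be written with numerator a polynomial over `A` and denominator
`b·det(X)^N` with `b ∈ A` whose image under `σ` is nonzero, and `y` is the corresponding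
quotient of the images. -/
def SpecTo {A B : Type*} [CommRing A] [IsDomain A] [CommRing B] (n : ℕ) (σ : A →+* B)
    (p : MatrixLoc n (FractionRing A)) (y : MatrixLoc n B) : Prop :=
  ∃ (P : MvPolynomial (Fin n × Fin n) A) (b : A) (N : ℕ),
    b ≠ 0 ∧ σ b ≠ 0 ∧
    p * toML n (algebraMap A (FractionRing A)) (MvPolynomial.C b * detPoly n A ^ N)
      = toML n (algebraMap A (FractionRing A)) P ∧
    y * toML n σ (MvPolynomial.C b * detPoly n A ^ N) = toML n σ P

end MatrixLocalization

noncomputable section Embeddings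

variable {Ω k : Type*} [Field Ω] [Field k] [Algebra k Ω] (D : Subalgebra k Ω)

theorem algebraMap_subalgebra_injective : Function.Injective (algebraMap ↥D Ω) :=
  Subtype.val_injective

/-- The embedding `F = Frac(D) → Ω`. -/
def embF : FractionRing ↥D →+* Ω :=
  IsFractionRing.lift (g := algebraMap ↥D Ω) (algebraMap_subalgebra_injective D)

/-- The embedding `F(x) = Frac(D[x]) → Ω(x) = Frac(Ω[x])`. -/
def embFx : FractionRing (Polynomial ↥D) →+* FractionRing (Polynomial Ω) :=
  IsFractionRing.lift
    (g := (algebraMap (Polynomial Ω) (FractionRing (Polynomial Ω))).comp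
      (Polynomial.mapRingHom (algebraMap ↥D Ω)))
    ((IsFractionRing.injective (Polynomial Ω) (FractionRing (Polynomial Ω))).comp
      (Polynomial.map_injective _ (algebraMap_subalgebra_injective D)))

/-- The induced embedding `F[X,1/det(X)] → Ω[X,1/det(X)]`. -/
def embML (n : ℕ) : MatrixLoc n (FractionRing ↥D) →+* MatrixLoc n Ω :=
  MatrixLocMap n (embF D)

/-- The induced embedding `F(x)[X,1/det(X)] → Ω(x)[X,1/det(X)]`. -/
def embMLx (n : ℕ) :
    MatrixLoc n (FractionRing (Polynomial ↥D)) →+* MatrixLoc n (FractionRing (Polynomial Ω)) :=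
  MatrixLocMap n (embFx D)

end Embeddings


noncomputable section Helpers
open MvPolynomial

section Basic
variable {E : Type*} [CommRing E] {n : ℕ}


theorem detPoly_ne_zero [Nontrivial E] : detPoly n E ≠ 0 := by
  intro h
  have h2 : MvPolynomial.eval (fun p : Fin n × Fin n => if p.1 = p.2 then (1:E) else 0) (detPoly n E) = 0 := by
    rw [h]; simp
  rw [detPoly, RingHom.map_det] at h2
  have : ((MvPolynomial.eval fun p : Fin n × Fin n => if p.1 = p.2 then (1:E) else 0).mapMatrix
      (Matrix.of fun i j : Fin n => MvPolynomial.X (i, j))) = (1 : Matrix (Fin n) (Fin n) E) := by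
    ext i j
    simp [Matrix.one_apply]
  rw [this] at h2
  simp at h2

theorem iotaML_injective [IsDomain E] :
    Function.Injective (algebraMap (MvPolynomial (Fin n × Fin n) E) (MatrixLoc n E)) :=
  IsLocalization.injective _ (powers_le_nonZeroDivisors_of_noZeroDivisors detPoly_ne_zero)

theorem isUnit_iotaML_det :
    IsUnit (algebraMap (MvPolynomial (Fin n × Fin n) E) (MatrixLoc n E) (detPoly n E)) :=
  IsLocalization.Away.algebraMap_isUnit _

theorem exists_repML (z : MatrixLoc n E) :
    ∃ (P : MvPolynomial (Fin n × Fin n) E) (N : ℕ),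
      z * algebraMap (MvPolynomial (Fin n × Fin n) E) (MatrixLoc n E) (detPoly n E ^ N)
        = algebraMap _ _ P := by
  obtain ⟨⟨P, s⟩, hs⟩ := IsLocalization.surj (Submonoid.powers (detPoly n E)) z
  obtain ⟨N, hN⟩ := s.2
  simp only at hN
  exact ⟨P, N, by rw [hN]; exact hs⟩


theorem repML_pad {E : Type*} [CommRing E] {n : ℕ} (z : MatrixLoc n E)
    (V : MvPolynomial (Fin n × Fin n) E) (N K : ℕ)
    (h : z * algebraMap (MvPolynomial (Fin n × Fin n) E) (MatrixLoc n E) (detPoly n E ^ N)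
      = algebraMap _ _ V) :
    z * algebraMap (MvPolynomial (Fin n × Fin n) E) (MatrixLoc n E) (detPoly n E ^ (N + K))
      = algebraMap _ _ (V * detPoly n E ^ K) := by
  rw [pow_add, map_mul, ← mul_assoc, h, ← map_mul]

end Basic

section Pi

variable {F E : Type*} [Field F] [Field E] [Algebra F E] {σ' : Type*}

theorem exists_piZero : ∃ π₀ : E →ₗ[F] F, ∀ c, π₀ (algebraMap F E c) = c := by
  obtain ⟨g, hg⟩ := LinearMap.exists_leftInverse_of_injective (Algebra.linearMap F E)
    (LinearMap.ker_eq_bot.mpr (algebraMap F E).injective)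
  exact ⟨g, fun c => by simpa using LinearMap.congr_fun hg c⟩

def piPoly (π₀ : E →ₗ[F] F) (a : MvPolynomial σ' E) : MvPolynomial σ' F :=
  ∑ m ∈ a.support, MvPolynomial.monomial m (π₀ (MvPolynomial.coeff m a))

theorem coeff_piPoly (π₀ : E →ₗ[F] F) (a : MvPolynomial σ' E) (m : σ' →₀ ℕ) :
    coeff m (piPoly π₀ a) = π₀ (coeff m a) := by
  classical
  rw [piPoly, MvPolynomial.coeff_sum, Finset.sum_eq_single m]
  · rw [coeff_monomial, if_pos rfl]
  · intro b _ hb; rw [coeff_monomial, if_neg hb]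
  · intro hm
    rw [coeff_monomial, if_pos rfl, MvPolynomial.notMem_support_iff.mp hm, map_zero]

theorem piPoly_add (π₀ : E →ₗ[F] F) (a b : MvPolynomial σ' E) :
    piPoly π₀ (a + b) = piPoly π₀ a + piPoly π₀ b := by
  apply MvPolynomial.ext; intro m
  simp [coeff_piPoly, MvPolynomial.coeff_add]

theorem piPoly_zero (π₀ : E →ₗ[F] F) : piPoly π₀ (0 : MvPolynomial σ' E) = 0 := by
  apply MvPolynomial.ext; intro m
  simp [coeff_piPoly]

theorem piPoly_sum {ι : Type*} (π₀ : E →ₗ[F] F) (t : Finset ι) (f : ι → MvPolynomial σ' E) :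
    piPoly π₀ (∑ i ∈ t, f i) = ∑ i ∈ t, piPoly π₀ (f i) := by
  classical
  induction t using Finset.induction with
  | empty => simp [piPoly_zero]
  | insert a s h ih => rw [Finset.sum_insert h, piPoly_add, ih, Finset.sum_insert h]

theorem piPoly_map_mul (π₀ : E →ₗ[F] F) (Q : MvPolynomial σ' F) (a : MvPolynomial σ' E) :
    piPoly π₀ (MvPolynomial.map (algebraMap F E) Q * a) = Q * piPoly π₀ a := by
  classical
  apply MvPolynomial.ext; intro m
  rw [coeff_piPoly, MvPolynomial.coeff_mul, MvPolynomial.coeff_mul, map_sum]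
  apply Finset.sum_congr rfl
  intro x _
  rw [MvPolynomial.coeff_map, coeff_piPoly, ← Algebra.smul_def, map_smul, smul_eq_mul]

theorem piPoly_one (π₀ : E →ₗ[F] F) (hπ : ∀ c, π₀ (algebraMap F E c) = c) :
    piPoly π₀ (1 : MvPolynomial σ' E) = 1 := by
  apply MvPolynomial.ext; intro m
  classical
  rw [coeff_piPoly, MvPolynomial.coeff_one, MvPolynomial.coeff_one]
  split_ifs
  · rw [← map_one (algebraMap F E), hπ]
  · exact map_zero π₀

theorem piPoly_map (π₀ : E →ₗ[F] F) (hπ : ∀ c, π₀ (algebraMap F E c) = c)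
    (Q : MvPolynomial σ' F) : piPoly π₀ (MvPolynomial.map (algebraMap F E) Q) = Q := by
  have h := piPoly_map_mul π₀ Q (1 : MvPolynomial σ' E)
  rw [mul_one, piPoly_one π₀ hπ, mul_one] at h
  exact h


end Pi


variable {F E : Type*} [Field F] [Field E] (emb : F →+* E) {n : ℕ}

theorem MatrixLocMap_algebraMap (P : MvPolynomial (Fin n × Fin n) F) :
    MatrixLocMap n emb (algebraMap (MvPolynomial (Fin n × Fin n) F) (MatrixLoc n F) P)
      = algebraMap (MvPolynomial (Fin n × Fin n) E) (MatrixLoc n E) (MvPolynomial.map emb P) := by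
  rw [MatrixLocMap, Localization.awayLift]
  exact IsLocalization.Away.lift_eq _ _ P

theorem descend {ι : Type*} (t : Finset ι) (p' : MatrixLoc n F)
    (q : ι → MatrixLoc n F) (c : ι → MatrixLoc n E)
    (h : MatrixLocMap n emb p' = ∑ i ∈ t, c i * MatrixLocMap n emb (q i)) :
    ∃ (M : ℕ) (e : ι → MatrixLoc n F),
      p' * algebraMap (MvPolynomial (Fin n × Fin n) F) (MatrixLoc n F) (detPoly n F ^ M)
        = ∑ i ∈ t, e i * q i := by
  classical
  letI : Algebra F E := emb.toAlgebra
  have halg : algebraMap F E = emb := rfl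
  obtain ⟨π₀, hπ⟩ := exists_piZero (F := F) (E := E)
  obtain ⟨U₀, N₀, hU⟩ := exists_repML p'
  choose V Nq hV using fun i => exists_repML (q i)
  choose W Mc hW using fun i => exists_repML (c i)
  have hgι : ∀ P, MatrixLocMap n emb (algebraMap _ (MatrixLoc n F) P)
      = algebraMap _ (MatrixLoc n E) (MvPolynomial.map emb P) := fun P =>
    MatrixLocMap_algebraMap emb P
  have hdetE : ∀ (N : ℕ), MatrixLocMap n emb (algebraMap _ (MatrixLoc n F) (detPoly n F ^ N))
      = algebraMap _ (MatrixLoc n E) (detPoly n E ^ N) := by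
    intro N
    rw [hgι, map_pow, map_detPoly]
  have hU' : MatrixLocMap n emb p' * algebraMap _ (MatrixLoc n E) (detPoly n E ^ N₀)
      = algebraMap _ (MatrixLoc n E) (MvPolynomial.map emb U₀) := by
    rw [← hdetE, ← map_mul, hU, hgι]
  have hgq : ∀ i, MatrixLocMap n emb (q i)
        * algebraMap _ (MatrixLoc n E) (detPoly n E ^ Nq i)
      = algebraMap _ (MatrixLoc n E) (MvPolynomial.map emb (V i)) := by
    intro i
    rw [← hdetE, ← map_mul, hV i, hgι]
  have master : algebraMap _ (MatrixLoc n E)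
        (MvPolynomial.map emb U₀ * detPoly n E ^ (∑ j ∈ t, (Nq j + Mc j)))
      = ∑ i ∈ t, algebraMap _ (MatrixLoc n E) (W i * MvPolynomial.map emb (V i)
          * detPoly n E ^ (N₀ + ∑ j ∈ t.erase i, (Nq j + Mc j))) := by
    rw [map_mul]
    rw [← hU']
    rw [h]
    rw [Finset.sum_mul, Finset.sum_mul]
    refine Finset.sum_congr rfl fun i hi => ?_
    have hSi : (∑ j ∈ t, (Nq j + Mc j))
        = (Nq i + Mc i) + ∑ j ∈ t.erase i, (Nq j + Mc j) :=
      (Finset.add_sum_erase t _ hi).symm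
    rw [hSi]
    simp only [map_mul, pow_add, map_pow]
    rw [← hgq i, ← hW i]
    simp only [map_pow]
    ring
  have hinj : Function.Injective (algebraMap (MvPolynomial (Fin n × Fin n) E) (MatrixLoc n E)) :=
    iotaML_injective
  have polyid : MvPolynomial.map emb U₀ * detPoly n E ^ (∑ j ∈ t, (Nq j + Mc j))
      = ∑ i ∈ t, W i * MvPolynomial.map emb (V i)
          * detPoly n E ^ (N₀ + ∑ j ∈ t.erase i, (Nq j + Mc j)) := by
    apply hinj
    rw [map_sum]
    exact master
  have polyid' : MvPolynomial.map (algebraMap F E) (U₀ * detPoly n F ^ (∑ j ∈ t, (Nq j + Mc j)))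
      = ∑ i ∈ t, MvPolynomial.map (algebraMap F E)
          ((V i * detPoly n F ^ (N₀ + ∑ j ∈ t.erase i, (Nq j + Mc j)))) * W i := by
    rw [halg]
    simp only [map_mul, map_pow, map_detPoly]
    rw [polyid]
    refine Finset.sum_congr rfl fun i _ => ?_
    ring
  have h2 : U₀ * detPoly n F ^ (∑ j ∈ t, (Nq j + Mc j))
      = ∑ i ∈ t, (V i * detPoly n F ^ (N₀ + ∑ j ∈ t.erase i, (Nq j + Mc j)))
          * piPoly π₀ (W i) := by
    have h1 := congrArg (piPoly π₀) polyid'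
    rw [piPoly_map π₀ hπ, piPoly_sum] at h1
    exact h1.trans (Finset.sum_congr rfl fun i _ => piPoly_map_mul π₀ _ _)
  refine ⟨N₀ + ∑ j ∈ t, (Nq j + Mc j), fun i =>
    algebraMap _ (MatrixLoc n F) (detPoly n F ^ (Nq i + (N₀ + ∑ j ∈ t.erase i, (Nq j + Mc j)))
      * piPoly π₀ (W i)), ?_⟩
  have lhs : p' * algebraMap (MvPolynomial (Fin n × Fin n) F) (MatrixLoc n F)
        (detPoly n F ^ (N₀ + ∑ j ∈ t, (Nq j + Mc j)))
      = algebraMap _ (MatrixLoc n F) (U₀ * detPoly n F ^ (∑ j ∈ t, (Nq j + Mc j))) := by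
    rw [pow_add, map_mul, ← mul_assoc, hU, ← map_mul]
  rw [lhs, h2, map_sum]
  refine Finset.sum_congr rfl fun i hi => ?_
  simp only [map_mul, map_pow]
  rw [← hV i]
  simp only [map_pow, pow_add]
  ring



section Main

variable {A : Type*} [CommRing A] [IsDomain A] {n : ℕ} {σ' : Type*}

theorem exists_clear (W : MvPolynomial σ' (FractionRing A)) :
    ∃ (b : A) (P : MvPolynomial σ' A), b ≠ 0 ∧
      MvPolynomial.C (algebraMap A (FractionRing A) b) * W
        = MvPolynomial.map (algebraMap A (FractionRing A)) P := by
  classical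
  obtain ⟨b, hb⟩ := IsLocalization.exist_integer_multiples_of_finset (nonZeroDivisors A)
    (W.support.image fun m => MvPolynomial.coeff m W)
  have hbc : ∀ m, ∃ a : A, m ∈ W.support →
      algebraMap A (FractionRing A) a = (b : A) • MvPolynomial.coeff m W := by
    intro m
    by_cases hm : m ∈ W.support
    · obtain ⟨a, ha⟩ := hb _ (Finset.mem_image_of_mem _ hm)
      exact ⟨a, fun _ => ha⟩
    · exact ⟨0, fun h' => absurd h' hm⟩
  choose fP hfP using hbc
  refine ⟨b, ∑ m ∈ W.support, MvPolynomial.monomial m (fP m),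
    nonZeroDivisors.ne_zero b.2, ?_⟩
  apply MvPolynomial.ext; intro m
  rw [MvPolynomial.coeff_C_mul, MvPolynomial.coeff_map, MvPolynomial.coeff_sum]
  by_cases hm : m ∈ W.support
  · rw [Finset.sum_eq_single m]
    · rw [MvPolynomial.coeff_monomial, if_pos rfl, hfP m hm, Algebra.smul_def]
    · intro c _ hc; rw [MvPolynomial.coeff_monomial, if_neg hc]
    · intro h'; exact absurd hm h'
  · rw [MvPolynomial.notMem_support_iff.mp hm, mul_zero]
    rw [Finset.sum_eq_zero, map_zero]
    intro c hc
    rw [MvPolynomial.coeff_monomial, if_neg]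
    intro h'; rw [h'] at hc; exact hm hc

theorem exists_repA (z : MatrixLoc n (FractionRing A)) :
    ∃ (P : MvPolynomial (Fin n × Fin n) A) (b : A) (N : ℕ), b ≠ 0 ∧
      z * toML n (algebraMap A (FractionRing A)) (MvPolynomial.C b * detPoly n A ^ N)
        = toML n (algebraMap A (FractionRing A)) P := by
  obtain ⟨Wp, N, hW⟩ := exists_repML z
  obtain ⟨b, P, hb, hc⟩ := exists_clear Wp
  refine ⟨P, b, N, hb, ?_⟩
  have h1 : toML n (algebraMap A (FractionRing A)) (MvPolynomial.C b * detPoly n A ^ N)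
      = algebraMap (MvPolynomial (Fin n × Fin n) (FractionRing A)) (MatrixLoc n (FractionRing A))
          (MvPolynomial.C (algebraMap A (FractionRing A) b) * detPoly n (FractionRing A) ^ N) := by
    simp only [toML, RingHom.comp_apply, map_mul, map_pow, MvPolynomial.map_C, map_detPoly]
  have h2 : toML n (algebraMap A (FractionRing A)) P
      = algebraMap (MvPolynomial (Fin n × Fin n) (FractionRing A)) (MatrixLoc n (FractionRing A))
          (MvPolynomial.map (algebraMap A (FractionRing A)) P) := rfl
  rw [h1, h2, ← hc, map_mul, map_mul, ← mul_assoc, mul_comm z, mul_assoc, hW, ← map_mul]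

end Main

section MainLemma

variable {A : Type*} [CommRing A] [IsDomain A]

set_option maxHeartbeats 1000000 in
theorem main {E : Type*} [Field E] (n : ℕ) (emb : FractionRing A →+* E)
    (S₁ S₂ : Finset (MatrixLoc n (FractionRing A)))
    (h : ∀ p ∈ S₁, MatrixLocMap n emb p ∈ (Ideal.span (⇑(MatrixLocMap n emb) '' ↑S₂)).radical) :
    ∃ c : A, c ≠ 0 ∧ ∀ {B : Type*} [Field B] (σ : A →+* B), σ c ≠ 0 →
      ∃ Φ : MatrixLoc n (FractionRing A) → MatrixLoc n B,
        (∀ p ∈ (S₁ : Set _) ∪ (S₂ : Set _), SpecTo n σ p (Φ p)) ∧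
        ∀ p ∈ S₁, Φ p ∈ (Ideal.span (Φ '' ↑S₂)).radical := by
  classical
  -- Step 1: descend radical membership to F = FractionRing A
  have hrad : ∀ p ∈ S₁, ∃ m : ℕ,
      p ^ m ∈ Ideal.span ((S₂ : Set (MatrixLoc n (FractionRing A)))) := by
    intro p hp
    obtain ⟨m, hm⟩ := Ideal.mem_radical_iff.mp (h p hp)
    rw [← map_pow] at hm
    rw [show (⇑(MatrixLocMap n emb) '' ↑S₂ : Set _) = ↑(S₂.image (MatrixLocMap n emb)) from
      (Finset.coe_image).symm] at hm
    obtain ⟨f, -, hf⟩ := Submodule.mem_span_finset.mp hm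
    have hpre : ∀ e : MatrixLoc n E, ∃ z, e ∈ S₂.image (MatrixLocMap n emb) →
        z ∈ S₂ ∧ MatrixLocMap n emb z = e := by
      intro e
      by_cases he : e ∈ S₂.image (MatrixLocMap n emb)
      · obtain ⟨z, hz, hze⟩ := Finset.mem_image.mp he
        exact ⟨z, fun _ => ⟨hz, hze⟩⟩
      · exact ⟨0, fun h' => absurd h' he⟩
    choose pre hpre' using hpre
    have hf' : MatrixLocMap n emb (p ^ m)
        = ∑ e ∈ S₂.image (MatrixLocMap n emb), f e * MatrixLocMap n emb (pre e) := by
      rw [← hf]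
      exact (Finset.sum_congr rfl fun e he => by rw [smul_eq_mul, (hpre' e he).2]).symm
    obtain ⟨M, d, hMd⟩ := descend emb (S₂.image (MatrixLocMap n emb)) (p ^ m) pre f hf'
    have hsum : p ^ m * algebraMap (MvPolynomial (Fin n × Fin n) (FractionRing A)) _
        (detPoly n (FractionRing A) ^ M) ∈ Ideal.span ((S₂ : Set (MatrixLoc n (FractionRing A)))) := by
      rw [hMd]
      exact Ideal.sum_mem _ fun e he => Ideal.mul_mem_left _ _
        (Ideal.subset_span (hpre' e he).1)
    have hu : IsUnit (algebraMap (MvPolynomial (Fin n × Fin n) (FractionRing A))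
        (MatrixLoc n (FractionRing A)) (detPoly n (FractionRing A) ^ M)) := by
      rw [map_pow]; exact isUnit_iotaML_det.pow M
    obtain ⟨w, hw⟩ := isUnit_iff_exists_inv.mp hu
    refine ⟨m, ?_⟩
    have : p ^ m = p ^ m * algebraMap (MvPolynomial (Fin n × Fin n) (FractionRing A)) _
        (detPoly n (FractionRing A) ^ M) * w := by
      rw [mul_assoc, hw, mul_one]
    rw [this]
    exact Ideal.mul_mem_right _ _ hsum
  -- Step 2: choose representations over A for every element
  choose P b N hb hPb using fun z : MatrixLoc n (FractionRing A) => exists_repA z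
  -- Step 3: choose combinations for p ∈ S₁
  have hrad' : ∀ p : MatrixLoc n (FractionRing A), ∃ (m : ℕ)
      (f : MatrixLoc n (FractionRing A) → MatrixLoc n (FractionRing A)),
      p ∈ S₁ → p ^ m = ∑ q ∈ S₂, f q * q := by
    intro p
    by_cases hp : p ∈ S₁
    · obtain ⟨m, hm⟩ := hrad p hp
      obtain ⟨f, -, hf⟩ := Submodule.mem_span_finset.mp hm
      refine ⟨m, f, fun _ => ?_⟩
      rw [← hf]
      exact (Finset.sum_congr rfl fun q _ => (smul_eq_mul ..)).symm
    · exact ⟨0, fun _ => 0, fun h' => absurd h' hp⟩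
  choose m f hmf using hrad'
  -- abbreviation for denominators
  -- the key polynomial identity over A, for p ∈ S₁
  have hinjA : Function.Injective (toML n (algebraMap A (FractionRing A))) := by
    have h1 : Function.Injective (MvPolynomial.map (σ := Fin n × Fin n)
        (algebraMap A (FractionRing A))) :=
      MvPolynomial.map_injective _ (IsFractionRing.injective A (FractionRing A))
    intro x y hxy
    exact h1 (iotaML_injective hxy)
  have hv : ∀ z : MatrixLoc n (FractionRing A),
      z * toML n (algebraMap A (FractionRing A)) (MvPolynomial.C (b z) * detPoly n A ^ N z)
        = toML n (algebraMap A (FractionRing A)) (P z) := hPb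
  have key : ∀ p ∈ S₁,
      P p ^ m p * ∏ q ∈ S₂, (MvPolynomial.C (b (f p q)) * detPoly n A ^ N (f p q)
          * (MvPolynomial.C (b q) * detPoly n A ^ N q))
        = ∑ q ∈ S₂, P (f p q) * (MvPolynomial.C (b p) * detPoly n A ^ N p) ^ m p
            * (∏ q' ∈ S₂.erase q, (MvPolynomial.C (b (f p q')) * detPoly n A ^ N (f p q')
                * (MvPolynomial.C (b q') * detPoly n A ^ N q'))) * P q := by
    intro p hp
    apply hinjA
    have hv' : ∀ z : MatrixLoc n (FractionRing A),
        z * (toML n (algebraMap A (FractionRing A)) (MvPolynomial.C (b z))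
          * toML n (algebraMap A (FractionRing A)) (detPoly n A) ^ N z)
        = toML n (algebraMap A (FractionRing A)) (P z) := by
      intro z
      rw [← map_pow, ← map_mul]
      exact hv z
    simp only [map_mul, map_pow, map_sum, map_prod]
    rw [← hv' p, mul_pow, hmf p hp, Finset.sum_mul, Finset.sum_mul]
    refine Finset.sum_congr rfl fun q hq => ?_
    rw [← Finset.mul_prod_erase _ _ hq, ← hv' q, ← hv' (f p q)]
    ring
  -- Step 4: the nonzero element c
  refine ⟨(∏ z ∈ S₁ ∪ S₂, b z) * ∏ p' ∈ S₁, ∏ q ∈ S₂, b (f p' q), ?_, ?_⟩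
  · refine mul_ne_zero ?_ ?_
    · exact Finset.prod_ne_zero_iff.mpr fun z _ => hb z
    · exact Finset.prod_ne_zero_iff.mpr fun p' _ =>
        Finset.prod_ne_zero_iff.mpr fun q _ => hb (f p' q)
  intro B _ σ hσ
  simp only [map_mul, map_prod] at hσ
  obtain ⟨hσa, hσb⟩ := mul_ne_zero_iff.mp hσ
  have hσ1 : ∀ z ∈ S₁ ∪ S₂, σ (b z) ≠ 0 := Finset.prod_ne_zero_iff.mp hσa
  have hσ2 : ∀ p' ∈ S₁, ∀ q ∈ S₂, σ (b (f p' q)) ≠ 0 := by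
    intro p' hp' q hq
    exact Finset.prod_ne_zero_iff.mp (Finset.prod_ne_zero_iff.mp hσb p' hp') q hq
  -- units
  have hunit : ∀ z : MatrixLoc n (FractionRing A), σ (b z) ≠ 0 →
      IsUnit (toML n σ (MvPolynomial.C (b z) * detPoly n A ^ N z)) := by
    intro z hz
    have h1 : toML n σ (MvPolynomial.C (b z) * detPoly n A ^ N z)
        = algebraMap (MvPolynomial (Fin n × Fin n) B) (MatrixLoc n B)
            (MvPolynomial.C (σ (b z))) * algebraMap (MvPolynomial (Fin n × Fin n) B)
            (MatrixLoc n B) (detPoly n B) ^ N z := by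
      simp only [toML, RingHom.comp_apply, map_mul, map_pow, MvPolynomial.map_C, map_detPoly]
    rw [h1]
    refine IsUnit.mul ?_ (isUnit_iotaML_det.pow (N z))
    exact ((isUnit_iff_ne_zero.mpr hz).map MvPolynomial.C).map
      (algebraMap (MvPolynomial (Fin n × Fin n) B) (MatrixLoc n B))
  -- define Φ
  set Φ : MatrixLoc n (FractionRing A) → MatrixLoc n B := fun z =>
    if hz : σ (b z) ≠ 0 then
      toML n σ (P z) * ((hunit z hz).unit⁻¹ : (MatrixLoc n B)ˣ) else 0 with hΦdef
  have hΦ : ∀ z (hz : σ (b z) ≠ 0),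
      Φ z * toML n σ (MvPolynomial.C (b z) * detPoly n A ^ N z) = toML n σ (P z) := by
    intro z hz
    rw [hΦdef]
    simp only [dif_pos hz]
    rw [mul_assoc, IsUnit.val_inv_mul, mul_one]
  refine ⟨Φ, ?_, ?_⟩
  · -- SpecTo
    intro p hp
    have hp' : p ∈ S₁ ∪ S₂ := by
      rw [Finset.mem_union]
      rcases hp with hp | hp
      · exact Or.inl hp
      · exact Or.inr hp
    exact ⟨P p, b p, N p, hb p, hσ1 p hp', hPb p, hΦ p (hσ1 p hp')⟩
  · -- radical membership
    intro p hp
    have hzp : σ (b p) ≠ 0 := hσ1 p (Finset.mem_union_left _ hp)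
    refine Ideal.mem_radical_iff.mpr ⟨m p, ?_⟩
    have hk := congrArg (toML n σ) (key p hp)
    -- RHS is in the span
    have hmem : toML n σ (∑ q ∈ S₂, P (f p q) * (MvPolynomial.C (b p) * detPoly n A ^ N p) ^ m p
            * (∏ q' ∈ S₂.erase q, (MvPolynomial.C (b (f p q')) * detPoly n A ^ N (f p q')
                * (MvPolynomial.C (b q') * detPoly n A ^ N q'))) * P q)
        ∈ Ideal.span (Φ '' ↑S₂) := by
      rw [map_sum]
      refine Ideal.sum_mem _ fun q hq => ?_
      rw [map_mul, ← hΦ q (hσ1 q (Finset.mem_union_right _ hq))]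
      rw [← mul_assoc]
      exact Ideal.mul_mem_right _ _ (Ideal.mul_mem_left _ _
        (Ideal.subset_span ⟨q, hq, rfl⟩))
    rw [← hk] at hmem
    -- rewrite LHS in terms of Φ p and units
    have hre : toML n σ (P p ^ m p * ∏ q ∈ S₂, (MvPolynomial.C (b (f p q)) * detPoly n A ^ N (f p q)
          * (MvPolynomial.C (b q) * detPoly n A ^ N q)))
        = Φ p ^ m p * (toML n σ (MvPolynomial.C (b p) * detPoly n A ^ N p) ^ m p
          * ∏ q ∈ S₂, (toML n σ (MvPolynomial.C (b (f p q)) * detPoly n A ^ N (f p q))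
              * toML n σ (MvPolynomial.C (b q) * detPoly n A ^ N q))) := by
      rw [map_mul, map_pow, ← hΦ p hzp, map_prod, mul_pow]
      rw [Finset.prod_congr rfl fun q _ => map_mul (toML n σ) _ _]
      ring
    rw [hre] at hmem
    have hU : IsUnit (toML n σ (MvPolynomial.C (b p) * detPoly n A ^ N p) ^ m p
        * ∏ q ∈ S₂, (toML n σ (MvPolynomial.C (b (f p q)) * detPoly n A ^ N (f p q))
            * toML n σ (MvPolynomial.C (b q) * detPoly n A ^ N q))) := by
      refine IsUnit.mul ((hunit p hzp).pow (m p)) ?_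
      refine Finset.prod_induction _ IsUnit (fun _ _ => IsUnit.mul) isUnit_one fun q hq => ?_
      exact IsUnit.mul (hunit (f p q) (hσ2 p hp q hq)) (hunit q (hσ1 q (Finset.mem_union_right _ hq)))
    obtain ⟨w, hw⟩ := isUnit_iff_exists_inv.mp hU
    have : Φ p ^ m p = Φ p ^ m p * (toML n σ (MvPolynomial.C (b p) * detPoly n A ^ N p) ^ m p
        * ∏ q ∈ S₂, (toML n σ (MvPolynomial.C (b (f p q)) * detPoly n A ^ N (f p q))
            * toML n σ (MvPolynomial.C (b q) * detPoly n A ^ N q))) * w := by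
      rw [mul_assoc, hw, mul_one]
    rw [this]
    exact Ideal.mul_mem_right _ _ hmem

end MainLemma

end Helpers

/-- (Lemma 3.1(2) of the paper), in its two versions: over
`F(x)[X,1/det(X)]` and (respectively) over `F[X,1/det(X)]`: memberships of radicals of
finitely generated ideals are preserved by suitable specializations. -/
theorem radical_membership_specialization
    {Ω : Type*} [Field Ω] [IsAlgClosed Ω] [CharZero Ω]
    (k : Type*) [Field k] [Algebra k Ω]
    (kbar : Type*) [Field kbar] [Algebra k kbar] [IsAlgClosure k kbar]
    (D : Subalgebra k Ω) (hD : D.FG) (n : ℕ) (hn : 0 < n) :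
    -- version over `F(x)[X,1/det(X)]`
    (∀ S₁ S₂ : Finset (MatrixLoc n (FractionRing (Polynomial ↥D))),
      (∀ p ∈ S₁, embMLx D n p ∈ (Ideal.span (⇑(embMLx D n) '' ↑S₂)).radical) →
      ∃ c : ↥D, c ≠ 0 ∧ ∀ φ : ↥D →ₐ[k] kbar, φ c ≠ 0 →
        ∃ Φ : MatrixLoc n (FractionRing (Polynomial ↥D))
            → MatrixLoc n (FractionRing (Polynomial kbar)),
          (∀ p ∈ (S₁ : Set _) ∪ (S₂ : Set _),
            SpecTo n ((algebraMap (Polynomial kbar) (FractionRing (Polynomial kbar))).comp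
              (Polynomial.mapRingHom φ.toRingHom)) p (Φ p)) ∧
          ∀ p ∈ S₁, Φ p ∈ (Ideal.span (Φ '' ↑S₂)).radical) ∧
    -- version over `F[X,1/det(X)]`
    (∀ S₁ S₂ : Finset (MatrixLoc n (FractionRing ↥D)),
      (∀ p ∈ S₁, embML D n p ∈ (Ideal.span (⇑(embML D n) '' ↑S₂)).radical) →
      ∃ c : ↥D, c ≠ 0 ∧ ∀ φ : ↥D →ₐ[k] kbar, φ c ≠ 0 →
        ∃ Φ : MatrixLoc n (FractionRing ↥D) → MatrixLoc n kbar,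
          (∀ p ∈ (S₁ : Set _) ∪ (S₂ : Set _), SpecTo n φ.toRingHom p (Φ p)) ∧
          ∀ p ∈ S₁, Φ p ∈ (Ideal.span (Φ '' ↑S₂)).radical) := by
  haveI hdom : IsDomain ↥D := by
    exact Function.Injective.isDomain (algebraMap ↥D Ω) (algebraMap_subalgebra_injective D)
  constructor
  · -- version over F(x)
    intro S₁ S₂ h1
    have h1' : ∀ p ∈ S₁, MatrixLocMap n (embFx D) p
        ∈ (Ideal.span (⇑(MatrixLocMap n (embFx D)) '' ↑S₂)).radical := h1
    obtain ⟨b, hb, hB⟩ := main n (embFx D) S₁ S₂ h1'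
    refine ⟨b.leadingCoeff, Polynomial.leadingCoeff_ne_zero.mpr hb, ?_⟩
    intro φ hφ
    have h2 : Polynomial.map φ.toRingHom b ≠ 0 := by
      intro h0
      apply hφ
      have h3 : Polynomial.coeff (Polynomial.map φ.toRingHom b) b.natDegree = 0 := by
        rw [h0, Polynomial.coeff_zero]
      rw [Polynomial.coeff_map] at h3
      exact h3
    have hσ : ((algebraMap (Polynomial kbar) (FractionRing (Polynomial kbar))).comp
        (Polynomial.mapRingHom φ.toRingHom)) b ≠ 0 := by
      rw [RingHom.comp_apply, Polynomial.coe_mapRingHom]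
      intro h0
      exact h2 (IsFractionRing.injective (Polynomial kbar) (FractionRing (Polynomial kbar))
        (by rw [h0, map_zero]))
    exact hB _ hσ
  · -- version over F
    intro S₁ S₂ h1
    have h1' : ∀ p ∈ S₁, MatrixLocMap n (embF D) p
        ∈ (Ideal.span (⇑(MatrixLocMap n (embF D)) '' ↑S₂)).radical := h1
    obtain ⟨c, hc, hB⟩ := main n (embF D) S₁ S₂ h1'
    exact ⟨c, hc, fun φ hφ => hB φ.toRingHom hφ⟩
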